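/- Pumping lemma for context-free languages: for every context-free grammar G there exists a constant k (depending only on G) such that every string x ∈ L(G) with |x| > k admits a factorization x = y w₁ z w₂ u with w₁w₂ ≠ ε such that y w₁ⁿ z w₂ⁿ u ∈ L(G) for every n ≥ 0. -/

import Mathlib

open ContextFreeGrammar

namespace CFPump

variable {T : Type} {g : ContextFreeGrammar.{0} T}

abbrev σ (w : List T) : List (Symbol T g.NT) := w.map Symbol.terminal

/-- n-step derivation. -/
inductive DerivesIn (g : ContextFreeGrammar.{0} T) :
    ℕ → List (Symbol T g.NT) → List (Symbol T g.NT) → Prop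
  | refl (u) : DerivesIn g 0 u u
  | head {u v w n} (h : g.Produces u v) (hd : DerivesIn g n v w) : DerivesIn g (n + 1) u w

lemma DerivesIn.derives {n u v} (h : DerivesIn g n u v) : g.Derives u v := by
  induction h with
  | refl => rfl
  | head h _ ih => exact h.trans_derives ih

lemma derives_iff_derivesIn {u v : List (Symbol T g.NT)} :
    g.Derives u v ↔ ∃ n, DerivesIn g n u v := by
  constructor
  · intro h
    induction h with
    | refl => exact ⟨0, .refl u⟩
    | tail _ hstep ih =>
      obtain ⟨n, hn⟩ := ih
      refine ⟨n + 1, ?_⟩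
      clear * - hn hstep
      induction hn with
      | refl => exact .head hstep (.refl _)
      | head h _ ih => exact .head h (ih hstep)
  · rintro ⟨n, h⟩; exact h.derives

lemma DerivesIn.zero_eq {u v : List (Symbol T g.NT)} (h : DerivesIn g 0 u v) : u = v := by
  cases h; rfl

/-- A derivation from a concatenation splits. -/
lemma DerivesIn.split {n : ℕ} {x y w : List (Symbol T g.NT)}
    (h : DerivesIn g n (x ++ y) w) :
    ∃ n₁ n₂ w₁ w₂, n₁ + n₂ = n ∧ w = w₁ ++ w₂ ∧
      DerivesIn g n₁ x w₁ ∧ DerivesIn g n₂ y w₂ := by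
  induction n generalizing x y w with
  | zero =>
    exact ⟨0, 0, x, y, rfl, h.zero_eq.symm, .refl x, .refl y⟩
  | succ n ih =>
    rcases h with _ | ⟨⟨r, hr, hrw⟩, hd⟩
    rcases hrw.exists_parts with ⟨p, q, hpq, rfl⟩
    have hpq' : x ++ y = p ++ ([Symbol.nonterminal r.input] ++ q) := by
      simpa [List.append_assoc] using hpq
    rcases List.append_eq_append_iff.mp hpq' with ⟨a, ha1, ha2⟩ | ⟨c, hc1, hc2⟩
    · -- nonterminal inside y :  p = x ++ a,  y = a ++ [nt] ++ q
      subst ha1 ha2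
      have hprod : g.Produces (a ++ [Symbol.nonterminal r.input] ++ q)
          (a ++ r.output ++ q) := ⟨r, hr, r.rewrites_of_exists_parts a q⟩
      have hd' : DerivesIn g n (x ++ (a ++ r.output ++ q)) w := by
        simpa [List.append_assoc] using hd
      obtain ⟨n₁, n₂, w₁, w₂, hn, hw, h₁, h₂⟩ := ih hd'
      refine ⟨n₁, n₂ + 1, w₁, w₂, by omega, hw, h₁, .head ?_ h₂⟩
      simpa [List.append_assoc] using hprod
    · -- x = p ++ c,  [nt] ++ q = c ++ y
      cases c with
      | nil =>
        -- x = p, y = [nt] ++ q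
        simp only [List.append_nil] at hc1
        subst hc1
        have hprod : g.Produces ([Symbol.nonterminal r.input] ++ q) (r.output ++ q) := by
          refine ⟨r, hr, ?_⟩
          simpa using r.rewrites_of_exists_parts [] q
        have hd' : DerivesIn g n (x ++ (r.output ++ q)) w := by
          simpa [List.append_assoc] using hd
        obtain ⟨n₁, n₂, w₁, w₂, hn, hw, h₁, h₂⟩ := ih hd'
        refine ⟨n₁, n₂ + 1, w₁, w₂, by omega, hw, h₁, .head ?_ h₂⟩
        have hy : y = [Symbol.nonterminal r.input] ++ q := by simpa using hc2.symm
        rw [hy]; exact hprod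
      | cons s c =>
        rcases hc2 with ⟨rfl, rfl⟩
        -- x = p ++ [nt] ++ c,  q = c ++ y
        have hx : x = p ++ [Symbol.nonterminal r.input] ++ c := by
          simpa [List.append_assoc] using hc1
        subst hx
        have hprod : g.Produces (p ++ [Symbol.nonterminal r.input] ++ c)
            (p ++ r.output ++ c) := ⟨r, hr, r.rewrites_of_exists_parts p c⟩
        have hd' : DerivesIn g n ((p ++ r.output ++ c) ++ y) w := by
          simpa [List.append_assoc] using hd
        obtain ⟨n₁, n₂, w₁, w₂, hn, hw, h₁, h₂⟩ := ih hd'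
        exact ⟨n₁ + 1, n₂, w₁, w₂, by omega, hw, .head hprod h₁, h₂⟩

end CFPump

namespace CFPump

variable {T : Type} {g : ContextFreeGrammar.{0} T}

lemma DerivesIn.terminal_eq {n : ℕ} {u : List T} {v : List (Symbol T g.NT)}
    (h : DerivesIn g n (σ u) v) : v = σ u := by
  rcases h with _ | ⟨⟨r, _, hrw⟩, _⟩
  · rfl
  · exfalso
    rcases hrw.exists_parts with ⟨p, q, hpq, -⟩
    have : Symbol.nonterminal r.input ∈ (σ u : List (Symbol T g.NT)) := by
      rw [hpq]; simp
    simp only [σ, List.mem_map] at this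
    rcases this with ⟨_, _, h⟩
    exact nomatch h

lemma rewrites_singleton {r : ContextFreeRule T g.NT} {B : g.NT} {v : List (Symbol T g.NT)}
    (h : r.Rewrites [Symbol.nonterminal B] v) : r.input = B ∧ v = r.output := by
  rcases h.exists_parts with ⟨p, q, hpq, rfl⟩
  have hp : p = [] := by cases p <;> simp_all
  have hq : q = [] := by subst hp; cases q <;> simp_all
  subst hp hq
  simp_all

mutual
inductive PTree (g : ContextFreeGrammar.{0} T) : g.NT → Type
  | node (A : g.NT) (r : ContextFreeRule T g.NT) (hr : r ∈ g.rules) (hA : r.input = A)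
      (c : PForest g r.output) : PTree g A
inductive PForest (g : ContextFreeGrammar.{0} T) : List (Symbol T g.NT) → Type
  | nil : PForest g []
  | consT (a : T) {s : List (Symbol T g.NT)} (c : PForest g s) :
      PForest g (Symbol.terminal a :: s)
  | consN {B : g.NT} {s : List (Symbol T g.NT)} (t : PTree g B) (c : PForest g s) :
      PForest g (Symbol.nonterminal B :: s)
end

mutual
def PTree.yield : {A : g.NT} → PTree g A → List T
  | _, .node _ _ _ _ c => c.yield
def PForest.yield : {s : List (Symbol T g.NT)} → PForest g s → List T
  | _, .nil => []
  | _, .consT a c => a :: c.yield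
  | _, .consN t c => t.yield ++ c.yield
end

mutual
def PTree.size : {A : g.NT} → PTree g A → ℕ
  | _, .node _ _ _ _ c => c.size + 1
def PForest.size : {s : List (Symbol T g.NT)} → PForest g s → ℕ
  | _, .nil => 0
  | _, .consT _ c => c.size
  | _, .consN t c => t.size + c.size
end

mutual
def PTree.height : {A : g.NT} → PTree g A → ℕ
  | _, .node _ _ _ _ c => c.height + 1
def PForest.height : {s : List (Symbol T g.NT)} → PForest g s → ℕ
  | _, .nil => 0
  | _, .consT _ c => c.height
  | _, .consN t c => max t.height c.height
end

mutual
theorem PTree.derives : ∀ {A : g.NT} (t : PTree g A),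
    g.Derives [Symbol.nonterminal A] (σ t.yield)
  | _, .node A r hr hA c => by
    have h1 : g.Produces [Symbol.nonterminal A] r.output := by
      refine ⟨r, hr, ?_⟩
      subst hA
      simpa using r.rewrites_of_exists_parts [] []
    exact h1.trans_derives (by simpa [PTree.yield] using c.derives)
theorem PForest.derives : ∀ {s : List (Symbol T g.NT)} (c : PForest g s),
    g.Derives s (σ c.yield)
  | _, .nil => by simp [PForest.yield]; rfl
  | _, .consT a c => by
    have := (c.derives).append_left [Symbol.terminal a]
    simpa [PForest.yield, σ] using this
  | _, .consN (B := B) (s := s) t c => by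
    have h1 : g.Derives ([Symbol.nonterminal B] ++ s) (σ t.yield ++ s) :=
      t.derives.append_right s
    have h2 : g.Derives (σ t.yield ++ s) (σ t.yield ++ σ c.yield) :=
      c.derives.append_left (σ t.yield)
    have h3 := h1.trans h2
    simpa [PForest.yield, σ] using h3
end

end CFPump

namespace CFPump

variable {T : Type} {g : ContextFreeGrammar.{0} T}

@[simp] lemma yield_node (A r hr hA) (c : PForest g r.output) :
    (PTree.node A r hr hA c).yield = c.yield := rfl
@[simp] lemma yield_nil : (PForest.nil : PForest g []).yield = [] := rfl
@[simp] lemma yield_consT (a : T) {s} (c : PForest g s) :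
    (PForest.consT a c).yield = a :: c.yield := rfl
@[simp] lemma yield_consN {B s} (t : PTree g B) (c : PForest g s) :
    (PForest.consN t c).yield = t.yield ++ c.yield := rfl
@[simp] lemma size_node (A r hr hA) (c : PForest g r.output) :
    (PTree.node A r hr hA c).size = c.size + 1 := rfl
@[simp] lemma size_nil : (PForest.nil : PForest g []).size = 0 := rfl
@[simp] lemma size_consT (a : T) {s} (c : PForest g s) :
    (PForest.consT a c).size = c.size := rfl
@[simp] lemma size_consN {B s} (t : PTree g B) (c : PForest g s) :
    (PForest.consN t c).size = t.size + c.size := rfl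
@[simp] lemma height_node (A r hr hA) (c : PForest g r.output) :
    (PTree.node A r hr hA c).height = c.height + 1 := rfl
@[simp] lemma height_nil : (PForest.nil : PForest g []).height = 0 := rfl
@[simp] lemma height_consT (a : T) {s} (c : PForest g s) :
    (PForest.consT a c).height = c.height := rfl
@[simp] lemma height_consN {B s} (t : PTree g B) (c : PForest g s) :
    (PForest.consN t c).height = max t.height c.height := rfl

lemma DerivesIn.nil_eq {m : ℕ} {v : List (Symbol T g.NT)} (h : DerivesIn g m [] v) :
    v = [] := by
  rcases h with _ | ⟨⟨r, hr, hrw⟩, hd⟩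
  · rfl
  · exfalso
    rcases hrw.exists_parts with ⟨p, q, hpq, -⟩
    simp at hpq

lemma DerivesIn.nonterminal_head {m : ℕ} {B : g.NT} {v : List (Symbol T g.NT)}
    (h : DerivesIn g m [Symbol.nonterminal B] v)
    (hv : ∀ x ∈ v, ∃ a, x = Symbol.terminal a) :
    ∃ m' r, r ∈ g.rules ∧ r.input = B ∧ m = m' + 1 ∧ DerivesIn g m' r.output v := by
  rcases h with _ | ⟨⟨r, hr, hrw⟩, hd⟩
  · obtain ⟨a, ha⟩ := hv (Symbol.nonterminal B) (by simp)
    exact nomatch ha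
  · obtain ⟨hin, hout⟩ := rewrites_singleton hrw
    exact ⟨_, r, hr, hin, rfl, hout ▸ hd⟩

lemma exists_forest : ∀ n : ℕ, ∀ {s : List (Symbol T g.NT)} {w : List T} {m : ℕ}, m ≤ n →
    DerivesIn g m s (σ w) → ∃ c : PForest g s, c.yield = w := by
  intro n
  induction n using Nat.strong_induction_on with
  | _ n ihn =>
  intro s
  induction s with
  | nil =>
    intro w m _ h
    have hw : w = [] := by simpa [σ, List.map_eq_nil_iff] using h.nil_eq
    exact ⟨PForest.nil, by simp [hw]⟩
  | cons sym s' ihs =>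
    intro w m hm h
    have h' : DerivesIn g m ([sym] ++ s') (σ w) := by simpa using h
    obtain ⟨m₁, m₂, w₁, w₂, hmm, hw, h₁, h₂⟩ := h'.split
    obtain ⟨u₁, u₂, hu, hu₁, hu₂⟩ := List.map_eq_append_iff.mp hw
    subst hu; subst hu₁; subst hu₂
    obtain ⟨c', hc'⟩ := ihs (w := u₂) (m := m₂) (by omega) h₂
    cases sym with
    | terminal a =>
      have h₁' : DerivesIn g m₁ (σ [a]) (σ u₁) := by
        simpa [σ] using h₁
      have hu : u₁ = [a] :=
        List.map_injective_iff.mpr (fun x y hxy => Symbol.terminal.inj hxy) h₁'.terminal_eq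
      exact ⟨PForest.consT a c', by simp [hc', hu]⟩
    | nonterminal B =>
      have h₁' : DerivesIn g m₁ [Symbol.nonterminal B] (σ u₁) := h₁
      obtain ⟨m', r, hr, hin, hm', hd⟩ := h₁'.nonterminal_head (by simp [σ])
      obtain ⟨c₁, hc₁⟩ := ihn m' (by omega) (le_refl m') hd
      exact ⟨PForest.consN (PTree.node B r hr hin c₁) c', by simp [hc₁, hc']⟩
end CFPump

namespace CFPump

open scoped Classical

variable {T : Type} {g : ContextFreeGrammar.{0} T}

/-- Max branching: one plus the longest rule output. -/
def mB (g : ContextFreeGrammar.{0} T) : ℕ := (g.rules.sup fun r => r.output.length) + 1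

lemma one_le_mB : 1 ≤ mB g := Nat.succ_le_succ (Nat.zero_le _)

mutual
theorem PTree.yield_le : ∀ {A : g.NT} (t : PTree g A),
    t.yield.length ≤ mB g ^ t.height
  | _, .node A r hr hA c => by
    have h1 := c.yield_le
    have h2 : r.output.length ≤ mB g :=
      Nat.le_succ_of_le (Finset.le_sup (f := fun r : ContextFreeRule T g.NT => r.output.length) hr)
    have h3 : r.output.length * mB g ^ c.height ≤ mB g * mB g ^ c.height :=
      Nat.mul_le_mul_right _ h2
    simp only [yield_node, height_node, pow_succ]
    calc c.yield.length ≤ r.output.length * mB g ^ c.height := h1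
    _ ≤ mB g * mB g ^ c.height := h3
    _ = mB g ^ c.height * mB g := Nat.mul_comm _ _
theorem PForest.yield_le : ∀ {s : List (Symbol T g.NT)} (c : PForest g s),
    c.yield.length ≤ s.length * mB g ^ c.height
  | _, .nil => by simp
  | _, .consT a c => by
    have h1 := c.yield_le
    have h2 : 1 ≤ mB g ^ c.height := Nat.one_le_pow _ _ one_le_mB
    simp only [yield_consT, height_consT, List.length_cons, Nat.succ_mul]
    omega
  | _, .consN (B := B) (s := s) t c => by
    have h1 := t.yield_le
    have h2 := c.yield_le
    have hm : 1 ≤ mB g := one_le_mB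
    have p1 : mB g ^ t.height ≤ mB g ^ (PForest.consN t c).height :=
      Nat.pow_le_pow_right hm (by simp)
    have p2 : mB g ^ c.height ≤ mB g ^ (PForest.consN t c).height :=
      Nat.pow_le_pow_right hm (by simp)
    simp only [yield_consN, List.length_append, List.length_cons]
    calc t.yield.length + c.yield.length
        ≤ mB g ^ t.height + s.length * mB g ^ c.height := by omega
    _ ≤ mB g ^ (PForest.consN t c).height
        + s.length * mB g ^ (PForest.consN t c).height := by
          have := Nat.mul_le_mul_left s.length p2; omega
    _ = (s.length + 1) * mB g ^ (PForest.consN t c).height := by ring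
end

/-- The nonterminal of a symbol, if any. -/
def symNT : Symbol T g.NT → Option g.NT
  | .terminal _ => none
  | .nonterminal B => some B

/-- The relevant nonterminals of the grammar. -/
noncomputable def NTset (g : ContextFreeGrammar.{0} T) : Finset g.NT :=
  insert g.initial
    (g.rules.sup fun r => insert r.input (r.output.filterMap symNT).toFinset)

lemma initial_mem_NTset : g.initial ∈ NTset g := Finset.mem_insert_self _ _

lemma mem_NTset_of_output {r : ContextFreeRule T g.NT} (hr : r ∈ g.rules) {B : g.NT}
    (hB : Symbol.nonterminal B ∈ r.output) : B ∈ NTset g := by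
  refine Finset.mem_insert_of_mem (Finset.mem_sup.mpr ⟨r, hr, ?_⟩)
  refine Finset.mem_insert_of_mem ?_
  simp only [List.mem_toFinset, List.mem_filterMap]
  exact ⟨Symbol.nonterminal B, hB, rfl⟩

end CFPump

namespace CFPump

variable {T : Type} {g : ContextFreeGrammar.{0} T}

lemma derives_sub {u p q v : List (Symbol T g.NT)} {C : g.NT}
    (h : g.Derives u (p ++ [Symbol.nonterminal C] ++ q))
    (h2 : g.Derives [Symbol.nonterminal C] v) : g.Derives u (p ++ v ++ q) :=
  h.trans ((h2.append_left p).append_right q)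

/-- `t'` embeds into `t` with terminal context `(w₁, w₂)`. -/
structure Emb (w₁ w₂ : List T) {A B : g.NT} (t : PTree g A) (t' : PTree g B) : Prop where
  yeq : t.yield = w₁ ++ t'.yield ++ w₂
  der : g.Derives [Symbol.nonterminal A] (σ w₁ ++ [Symbol.nonterminal B] ++ σ w₂)
  rep : ∀ s : PTree g B, ∃ t'' : PTree g A, t''.yield = w₁ ++ s.yield ++ w₂ ∧
          t''.size + t'.size ≤ t.size + s.size

lemma Emb.refl {A : g.NT} (t : PTree g A) : Emb [] [] t t where
  yeq := by simp
  der := by simpa using Relation.ReflTransGen.refl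
  rep := fun s => ⟨s, by simp, by omega⟩

lemma Emb.trans {w₁ w₂ v₁ v₂ : List T} {A B C : g.NT}
    {t : PTree g A} {t' : PTree g B} {t'' : PTree g C}
    (h : Emb w₁ w₂ t t') (h' : Emb v₁ v₂ t' t'') : Emb (w₁ ++ v₁) (v₂ ++ w₂) t t'' where
  yeq := by rw [h.yeq, h'.yeq]; simp
  der := by
    have := derives_sub h.der h'.der
    simpa [σ, List.append_assoc] using this
  rep := by
    intro s
    obtain ⟨t₂, hy₂, hs₂⟩ := h'.rep s
    obtain ⟨t₃, hy₃, hs₃⟩ := h.rep t₂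
    refine ⟨t₃, ?_, by omega⟩
    rw [hy₃, hy₂]; simp
end CFPump

namespace CFPump

variable {T : Type} {g : ContextFreeGrammar.{0} T}

theorem forest_step : ∀ {s : List (Symbol T g.NT)} (c : PForest g s), 1 ≤ c.height →
    ∃ (B : g.NT) (t' : PTree g B) (w₁ w₂ : List T),
      Symbol.nonterminal B ∈ s ∧
      t'.height = c.height ∧
      c.yield = w₁ ++ t'.yield ++ w₂ ∧
      g.Derives s (σ w₁ ++ [Symbol.nonterminal B] ++ σ w₂) ∧
      t'.size ≤ c.size ∧
      ∀ tr : PTree g B, ∃ c' : PForest g s,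
        c'.yield = w₁ ++ tr.yield ++ w₂ ∧ c'.size + t'.size ≤ c.size + tr.size
  | _, .nil => by simp
  | _, .consT (s := s) a' c => by
    intro hh
    simp only [height_consT] at hh
    obtain ⟨B, t', w₁, w₂, hmem, hht, hy, hder, hsz, hrep⟩ := forest_step c hh
    refine ⟨B, t', a' :: w₁, w₂, by simp [hmem], by simpa using hht, by simp [hy], ?_, by
      simpa using hsz, ?_⟩
    · have := hder.append_left [Symbol.terminal a']
      simpa [σ, List.append_assoc] using this
    · intro tr
      obtain ⟨c', hc'y, hc's⟩ := hrep tr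
      exact ⟨PForest.consT a' c', by simp [hc'y], by simpa using hc's⟩
  | _, .consN (B := B₀) (s := s) t c => by
    intro hh
    rcases le_or_gt c.height t.height with hcmp | hcmp
    · refine ⟨B₀, t, [], c.yield, by simp, by simp [max_eq_left hcmp], by simp, ?_, by
        simp, ?_⟩
      · have := c.derives.append_left [Symbol.nonterminal B₀]
        simpa [σ] using this
      · intro tr
        exact ⟨PForest.consN tr c, by simp, by simp; omega⟩
    · have hh' : 1 ≤ c.height := by omega
      obtain ⟨B, t', w₁, w₂, hmem, hht, hy, hder, hsz, hrep⟩ := forest_step c hh'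
      refine ⟨B, t', t.yield ++ w₁, w₂, by simp [hmem],
        by simp [hht, max_eq_right (le_of_lt hcmp)], by simp [hy], ?_, by simp; omega, ?_⟩
      · have h1 : g.Derives ([Symbol.nonterminal B₀] ++ s) (σ t.yield ++ s) :=
          t.derives.append_right s
        have h2 : g.Derives (σ t.yield ++ s)
            (σ t.yield ++ (σ w₁ ++ [Symbol.nonterminal B] ++ σ w₂)) :=
          hder.append_left (σ t.yield)
        have h3 := h1.trans h2
        simpa [σ, List.append_assoc] using h3
      · intro tr
        obtain ⟨c', hc'y, hc's⟩ := hrep tr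
        exact ⟨PForest.consN t c', by simp [hc'y], by simp; omega⟩

theorem tree_step {A : g.NT} (t : PTree g A) (h : 2 ≤ t.height) :
    ∃ (B : g.NT) (t' : PTree g B) (w₁ w₂ : List T),
      B ∈ NTset g ∧ t.height ≤ t'.height + 1 ∧ t'.size < t.size ∧ Emb w₁ w₂ t t' := by
  obtain ⟨A, r, hr, hA, c⟩ := t
  simp only [height_node] at h
  obtain ⟨B, t', w₁, w₂, hmem, hht, hy, hder, hsz, hrep⟩ := forest_step c (by omega)
  refine ⟨B, t', w₁, w₂, mem_NTset_of_output hr hmem, by simp [hht], by simp; omega, ?_, ?_, ?_⟩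
  · simpa using hy
  · have h1 : g.Produces [Symbol.nonterminal A] r.output := by
      subst hA
      exact ⟨r, hr, by simpa using r.rewrites_of_exists_parts [] []⟩
    exact h1.trans_derives hder
  · intro tr
    obtain ⟨c', hc'y, hc's⟩ := hrep tr
    exact ⟨PTree.node A r hr hA c', by simpa using hc'y, by simp; omega⟩

end CFPump

namespace CFPump

variable {T : Type} {g : ContextFreeGrammar.{0} T}

open scoped Classical

theorem loop : ∀ n : ℕ, ∀ (S : Finset g.NT) {A Bc : g.NT} (t : PTree g A) (tc : PTree g Bc)
    (y u : List T),
    (NTset g).card - S.card ≤ n →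
    S ⊆ NTset g → Bc ∈ NTset g → Bc ∉ S →
    (NTset g).card - S.card + 1 ≤ tc.height →
    Emb y u t tc →
    (∀ C ∈ S, ∃ (tC : PTree g C) (y' u' w₁ w₂ : List T),
      Emb y' u' t tC ∧ Emb w₁ w₂ tC tc ∧ tc.size < tC.size) →
    ∃ (C : g.NT) (t₁ t₂ : PTree g C) (y' u' w₁ w₂ : List T),
      Emb y' u' t t₁ ∧ Emb w₁ w₂ t₁ t₂ ∧ t₂.size < t₁.size := by
  intro n
  induction n with
  | zero =>
    intro S A Bc t tc y u hn hS hBc hBcS hh hemb hinv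
    exfalso
    have : S.card < (NTset g).card :=
      Finset.card_lt_card (Finset.ssubset_iff_of_subset hS |>.mpr ⟨Bc, hBc, hBcS⟩)
    omega
  | succ n ih =>
    intro S A Bc t tc y u hn hS hBc hBcS hh hemb hinv
    have hcard : S.card < (NTset g).card :=
      Finset.card_lt_card (Finset.ssubset_iff_of_subset hS |>.mpr ⟨Bc, hBc, hBcS⟩)
    obtain ⟨B', tn, v₁, v₂, hB'mem, hhn, hsn, hstep⟩ := tree_step tc (by omega)
    by_cases hBB : B' = Bc
    · subst hBB
      exact ⟨B', tc, tn, y, u, v₁, v₂, hemb, hstep, hsn⟩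
    · by_cases hBS : B' ∈ S
      · obtain ⟨tC, y', u', w₁, w₂, h1, h2, h3⟩ := hinv B' hBS
        exact ⟨B', tC, tn, y', u', w₁ ++ v₁, v₂ ++ w₂, h1, h2.trans hstep, by omega⟩
      · have hins : (insert Bc S).card = S.card + 1 := Finset.card_insert_of_notMem hBcS
        refine ih (insert Bc S) t tn (y ++ v₁) (v₂ ++ u) (by omega)
          ?_ hB'mem (by simp [hBB, hBS]) (by omega) (hemb.trans hstep) ?_
        · intro x hx
          rcases Finset.mem_insert.mp hx with rfl | hx
          · exact hBc
          · exact hS hx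
        · intro C hC
          rcases Finset.mem_insert.mp hC with rfl | hC
          · exact ⟨tc, y, u, v₁, v₂, hemb, hstep, hsn⟩
          · obtain ⟨tC, y', u', w₁, w₂, h1, h2, h3⟩ := hinv C hC
            exact ⟨tC, y', u', w₁ ++ v₁, v₂ ++ w₂, h1, h2.trans hstep, by omega⟩

end CFPump

namespace CFPump

open scoped Classical

variable {T : Type} {g : ContextFreeGrammar.{0} T}

lemma PTree.size_pos {A : g.NT} (t : PTree g A) : 1 ≤ t.size := by
  obtain ⟨A, r, hr, hA, c⟩ := t; simp

lemma flatten_replicate_succ (n : ℕ) (w : List T) :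
    (List.replicate (n + 1) w).flatten = w ++ (List.replicate n w).flatten := by
  simp [List.replicate_succ]

lemma flatten_replicate_succ' (n : ℕ) (w : List T) :
    (List.replicate (n + 1) w).flatten = (List.replicate n w).flatten ++ w := by
  induction n with
  | zero => simp
  | succ n ih =>
    calc (List.replicate (n + 1 + 1) w).flatten
        = w ++ (List.replicate (n + 1) w).flatten := flatten_replicate_succ _ _
      _ = w ++ ((List.replicate n w).flatten ++ w) := by rw [ih]
      _ = (w ++ (List.replicate n w).flatten) ++ w := by rw [List.append_assoc]
      _ = (List.replicate (n + 1) w).flatten ++ w := by rw [flatten_replicate_succ]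

lemma pump {C : g.NT} {w₁ w₂ : List T}
    (h : g.Derives [Symbol.nonterminal C] (σ w₁ ++ [Symbol.nonterminal C] ++ σ w₂)) :
    ∀ n : ℕ, g.Derives [Symbol.nonterminal C]
      (σ (List.replicate n w₁).flatten ++ [Symbol.nonterminal C]
        ++ σ (List.replicate n w₂).flatten) := by
  intro n
  induction n with
  | zero => simpa using Relation.ReflTransGen.refl
  | succ n ih =>
    have h2 := derives_sub ih h
    rw [flatten_replicate_succ' n w₁, flatten_replicate_succ n w₂]
    simpa [σ, List.append_assoc] using h2

theorem main : ∀ N : ℕ, ∀ {A : g.NT} (t : PTree g A), t.size ≤ N → A ∈ NTset g →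
    mB g ^ (NTset g).card < t.yield.length →
    ∃ y w₁ z w₂ u : List T, t.yield = y ++ w₁ ++ z ++ w₂ ++ u ∧ w₁ ++ w₂ ≠ [] ∧
      ∀ n : ℕ, g.Derives [Symbol.nonterminal A]
        (σ (y ++ (List.replicate n w₁).flatten ++ z ++ (List.replicate n w₂).flatten ++ u)) := by
  intro N
  induction N with
  | zero => intro A t hsz _ _; exact absurd hsz (by have := t.size_pos; omega)
  | succ N ih =>
    intro A t hsz hA hlen
    have hht : (NTset g).card + 1 ≤ t.height := by
      by_contra hcon
      have h1 : t.yield.length ≤ mB g ^ t.height := t.yield_le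
      have h2 : mB g ^ t.height ≤ mB g ^ (NTset g).card :=
        Nat.pow_le_pow_right one_le_mB (by omega)
      omega
    obtain ⟨C, t₁, t₂, y, u, w₁, w₂, h1, h2, h3⟩ :=
      loop (NTset g).card ∅ t t (y := []) (u := []) (by simp) (by simp) hA (by simp)
        (by simpa using hht) (Emb.refl t) (by simp)
    by_cases h0 : w₁ ++ w₂ = ([] : List T)
    · -- both contexts empty: replace and recurse on a smaller tree
      have hw₁ : w₁ = [] := by cases List.append_eq_nil_iff.mp h0; assumption
      have hw₂ : w₂ = [] := (List.append_eq_nil_iff.mp h0).2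
      obtain ⟨t'', hy'', hs''⟩ := h1.rep t₂
      have hyy : t''.yield = t.yield := by
        rw [hy'', h1.yeq, h2.yeq, hw₁, hw₂]; simp
      have hsz'' : t''.size ≤ N := by have := h3; omega
      obtain ⟨y', w₁', z', w₂', u', e1, e2, e3⟩ := ih t'' hsz'' hA (by rw [hyy]; exact hlen)
      exact ⟨y', w₁', z', w₂', u', by rw [← hyy]; exact e1, e2, e3⟩
    · refine ⟨y, w₁, t₂.yield, w₂, u, ?_, h0, ?_⟩
      · rw [h1.yeq, h2.yeq]; simp
      · intro n
        have d1 := h1.der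
        have d2 := derives_sub d1 (pump h2.der n)
        have d2' : g.Derives [Symbol.nonterminal A]
            ((σ y ++ σ (List.replicate n w₁).flatten) ++ [Symbol.nonterminal C]
              ++ (σ (List.replicate n w₂).flatten ++ σ u)) := by
          simpa [List.append_assoc] using d2
        have d3 := derives_sub d2' t₂.derives
        simpa [σ, List.append_assoc] using d3

end CFPump

/-- **Pumping lemma for context-free languages.**
For every context-free grammar `G` there exists a constant `k` (depending only on `G`)
such that every string `x ∈ L(G)` with `|x| > k` admits a factorization
`x = y w₁ z w₂ u` with `w₁w₂ ≠ ε` such that `y w₁ⁿ z w₂ⁿ u ∈ L(G)` for every `n ≥ 0`. -/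
theorem contextFree_pumping_lemma {T : Type} (G : ContextFreeGrammar.{0} T) :
    ∃ k : ℕ, ∀ x ∈ G.language, k < x.length →
      ∃ y w₁ z w₂ u : List T,
        x = y ++ w₁ ++ z ++ w₂ ++ u ∧
        w₁ ++ w₂ ≠ [] ∧
        ∀ n : ℕ,
          y ++ (List.replicate n w₁).flatten ++ z ++ (List.replicate n w₂).flatten ++ u
            ∈ G.language := by
  classical
  refine ⟨CFPump.mB G ^ (CFPump.NTset G).card, ?_⟩
  intro x hx hlen
  rw [ContextFreeGrammar.mem_language_iff] at hx
  obtain ⟨n, hn⟩ := CFPump.derives_iff_derivesIn.mp hx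
  have hn' : CFPump.DerivesIn G n [Symbol.nonterminal G.initial] (CFPump.σ x) := hn
  obtain ⟨c, hc⟩ := CFPump.exists_forest n (le_refl n) hn'
  cases c with
  | consN t c' =>
  cases c' with
  | nil =>
  have hty : t.yield = x := by simpa using hc
  obtain ⟨y, w₁, z, w₂, u, e1, e2, e3⟩ :=
    CFPump.main t.size t (le_refl _) CFPump.initial_mem_NTset (by rw [hty]; exact hlen)
  refine ⟨y, w₁, z, w₂, u, by rw [← hty]; exact e1, e2, ?_⟩
  intro n
  rw [ContextFreeGrammar.mem_language_iff]
  simpa [CFPump.σ] using e3 n
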